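/- Let λ be an n-core and w the minimal-length coset representative with λ = w∅. Write Γ = α_{1,n−1} + α_{1,n−2} + ⋯ + α_{1,1} (so Γ = n·e_1 on V). Then ⟨w^{-1}(ρ/n), Γ⟩ = ℓ(λ) + (n−1)/2. -/

import Mathlib

open Finset

namespace Shi

/-- Number of boxes in column `j` (0-indexed) of the partition `lam` with `ℓ` positive parts:
the conjugate partition. -/
def conjP (lam : ℕ → ℕ) (ℓ j : ℕ) : ℕ := ((Finset.range ℓ).filter (fun i => j < lam i)).card

/-- Hook length of the (0-indexed) box `(i, j)` of the partition `lam` having `ℓ` positive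
parts. -/
def hookP (lam : ℕ → ℕ) (ℓ i j : ℕ) : ℤ :=
  (lam i : ℤ) - j + conjP lam ℓ j - i - 1

/-- `lam : ℕ → ℕ` (0-indexed, weakly decreasing, exactly `ℓ` positive parts) is an `n`-core:
no hook length is divisible by `n`. -/
def IsCore (n : ℕ) (lam : ℕ → ℕ) (ℓ : ℕ) : Prop :=
  Antitone lam ∧ (∀ i, 0 < lam i ↔ i < ℓ) ∧
    ∀ i j, i < ℓ → j < lam i → ¬ ((n : ℤ) ∣ hookP lam ℓ i j)

/-- The `k`-th β-number (first column hook length) of `lam`, 0-indexed. -/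
def betaP (lam : ℕ → ℕ) (ℓ k : ℕ) : ℤ := (lam k : ℤ) + ℓ - k - 1

/-- `x` is a bead of the original abacus of `lam`: a negative integer or a β-number. -/
def IsBead (lam : ℕ → ℕ) (ℓ : ℕ) (x : ℤ) : Prop := x < 0 ∨ ∃ k < ℓ, betaP lam ℓ k = x

/-- The vector `ρ = ((n-1)/2, (n-1)/2 - 1, …, (1-n)/2)`, half the sum of positive roots. -/
noncomputable def rhoV (n : ℕ) : Fin n → ℝ := fun i => ((n : ℝ) - 1) / 2 - ((i : ℕ) : ℝ)

/-- `w⁻¹(v)` for the affine transformation `w = t_a ∘ u` (translation by `a` after the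
permutation `u`), i.e. `w⁻¹(v) = u⁻¹ · (v - a)`. -/
noncomputable def winv (n : ℕ) (u : Equiv.Perm (Fin n)) (a : Fin n → ℤ) (v : Fin n → ℝ) : Fin n → ℝ :=
  fun i => v (u i) - (a (u i) : ℝ)

/-- `u` is the minimal length permutation sorting `-a` into antidominant position, i.e.
`a ∘ u` is weakly increasing and ties are broken stably; this is the finite part of the
minimal length coset representative `w = t_a u`. -/
def SortsMin {n : ℕ} (u : Equiv.Perm (Fin n)) (a : Fin n → ℤ) : Prop :=
  ∀ i j : Fin n, i < j → a (u i) < a (u j) ∨ (a (u i) = a (u j) ∧ u i < u j)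

/-- `a` is the vector of level numbers of the balanced abacus of `lam`: for some shift `c`
of the original abacus, the beads on runner `i` occupy exactly the levels `< a i`, and the
balance number is `0`. -/
def BalancedLevels (n : ℕ) (lam : ℕ → ℕ) (ℓ : ℕ) (a : Fin n → ℤ) : Prop :=
  (∑ i, a i) = 0 ∧ ∃ c : ℤ, ∀ i : Fin n, ∀ q : ℤ,
    IsBead lam ℓ (q * n + ((i : ℕ) : ℤ) - c) ↔ q < a i

/-- for `Γ = α_{1,n-1} + α_{1,n-2} + ⋯ + α_{1,1} = n·e_1 - η`,
`⟨w⁻¹(ρ/n), Γ⟩ = ℓ(λ) + (n-1)/2`. -/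
theorem Gamma_inner (n : ℕ) (hn : 2 ≤ n) (lam : ℕ → ℕ) (ℓ : ℕ)
    (hcore : IsCore n lam ℓ) (a : Fin n → ℤ) (hbal : BalancedLevels n lam ℓ a)
    (u : Equiv.Perm (Fin n)) (hu : SortsMin u a) :
    (∑ i : Fin n, winv n u a (fun t => rhoV n t / n) i *
        (if (i : ℕ) = 0 then (n : ℝ) - 1 else -1)) =
    (ℓ : ℝ) + ((n : ℝ) - 1) / 2 := by
  obtain ⟨hanti, hpos, -⟩ := hcore
  obtain ⟨hsum, c, hc⟩ := hbal
  have hn0 : (0:ℤ) < (n:ℤ) := by exact_mod_cast (by omega : 0 < n)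
  have hnne : (n:ℤ) ≠ 0 := ne_of_gt hn0
  set m : Fin n → ℤ := fun i => -(((i:ℕ) - c) / n) with hm
  have hr : ∀ i : Fin n, m i * n + (i:ℕ) - c = (((i:ℕ):ℤ) - c) % n := by
    intro i
    have h := Int.mul_ediv_add_emod (((i:ℕ):ℤ) - c) n
    simp only [hm]
    linarith
  have hr0 : ∀ i : Fin n, 0 ≤ (((i:ℕ):ℤ) - c) % n := fun i => Int.emod_nonneg _ hnne
  have hrn : ∀ i : Fin n, (((i:ℕ):ℤ) - c) % n < n := fun i => Int.emod_lt_of_pos _ hn0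
  have hma : ∀ i : Fin n, m i ≤ a i := by
    intro i
    have hb : IsBead lam ℓ ((m i - 1) * n + (i:ℕ) - c) := by
      left
      have := hr i; have := hrn i
      nlinarith
    have := (hc i (m i - 1)).mp hb
    omega
  have hbeta1 : ∀ k, k < ℓ → 1 ≤ betaP lam ℓ k := by
    intro k hk
    have h1 : 0 < lam k := (hpos k).mpr hk
    unfold betaP; omega
  have hbanti : ∀ k k', k < k' → k' < ℓ → betaP lam ℓ k' < betaP lam ℓ k := by
    intro k k' hkk hk'
    have := hanti (le_of_lt hkk)
    unfold betaP; omega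
  have h0nb : ¬ IsBead lam ℓ 0 := by
    rintro (h | ⟨k, hk, hb⟩)
    · omega
    · have := hbeta1 k hk; omega
  set F : Finset ℤ := (Finset.range ℓ).image (fun k => betaP lam ℓ k) with hF
  have hFcard : F.card = ℓ := by
    rw [hF, Finset.card_image_of_injOn, Finset.card_range]
    intro k hk k' hk' h
    simp only [Finset.mem_coe, Finset.mem_range] at hk hk'
    rcases lt_trichotomy k k' with h1 | h1 | h1
    · exact absurd h (ne_of_gt (hbanti k k' h1 hk'))
    · exact h1
    · exact absurd h (ne_of_lt (hbanti k' k h1 hk))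
  have hFmem : ∀ x : ℤ, x ∈ F ↔ (IsBead lam ℓ x ∧ 0 ≤ x) := by
    intro x
    constructor
    · intro hx
      rw [hF, Finset.mem_image] at hx
      obtain ⟨k, hk, hkx⟩ := hx
      rw [Finset.mem_range] at hk
      exact ⟨Or.inr ⟨k, hk, hkx⟩, by have := hbeta1 k hk; omega⟩
    · rintro ⟨h | ⟨k, hk, hkx⟩, hx⟩
      · omega
      · rw [hF, Finset.mem_image]
        exact ⟨k, Finset.mem_range.mpr hk, hkx⟩
  have hreslt : ∀ x : ℤ, ((x + c) % n).toNat < n := by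
    intro x
    have h1 := Int.emod_nonneg (x + c) hnne
    have h2 := Int.emod_lt_of_pos (x + c) hn0
    omega
  set res : ℤ → Fin n := fun x => ⟨((x + c) % n).toNat, hreslt x⟩ with hres
  have hrescast : ∀ x : ℤ, (((res x : ℕ)):ℤ) = (x + c) % n := by
    intro x
    simp only [hres]
    exact Int.toNat_of_nonneg (Int.emod_nonneg _ hnne)
  have hcount : F.card = ∑ i : Fin n, (F.filter (fun x => res x = i)).card :=
    Finset.card_eq_sum_card_fiberwise (fun x _ => Finset.mem_univ _)
  have hfiber : ∀ i : Fin n, (F.filter (fun x => res x = i)).card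
      = (Finset.Ico (m i) (a i)).card := by
    intro i
    apply Finset.card_nbij' (fun x => (x + c) / n) (fun q => q * n + (i:ℕ) - c)
    · intro x hx
      rw [Finset.mem_coe, Finset.mem_filter] at hx
      obtain ⟨hxF, hxres⟩ := hx
      rw [hFmem] at hxF
      obtain ⟨hbead, hx0⟩ := hxF
      have hxi : (((i:ℕ)):ℤ) = (x + c) % n := by rw [← hxres]; exact hrescast x
      have hdm := Int.mul_ediv_add_emod (x + c) n
      have hxeq : x = ((x + c)/n) * n + (i:ℕ) - c := by rw [hxi]; linarith
      rw [Finset.mem_coe, Finset.mem_Ico]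
      constructor
      · by_contra hlt
        push_neg at hlt
        have h1 : (x+c)/n ≤ m i - 1 := by omega
        have h2 : ((x+c)/n) * n ≤ (m i - 1) * n := by
          exact mul_le_mul_of_nonneg_right h1 (le_of_lt hn0)
        have := hr i; have := hrn i
        nlinarith
      · have := (hc i ((x + c)/n)).mp (by rw [← hxeq]; exact hbead)
        exact this
    · intro q hq
      rw [Finset.mem_coe, Finset.mem_Ico] at hq
      obtain ⟨hq1, hq2⟩ := hq
      rw [Finset.mem_coe, Finset.mem_filter]
      have hbead : IsBead lam ℓ (q * n + (i:ℕ) - c) := (hc i q).mpr hq2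
      have hnn : 0 ≤ q * n + (i:ℕ) - c := by
        have h2 : m i * n ≤ q * n := mul_le_mul_of_nonneg_right hq1 (le_of_lt hn0)
        have := hr i; have := hr0 i
        linarith
      refine ⟨(hFmem _).mpr ⟨hbead, hnn⟩, ?_⟩
      have : (q * n + (i:ℕ) - c + c) % n = (i:ℕ) := by
        have : q * n + (i:ℕ) - c + c = (i:ℕ) + q * n := by ring
        rw [this, Int.add_mul_emod_self_right]
        exact Int.emod_eq_of_lt (by positivity) (by exact_mod_cast i.isLt)
      simp only [hres]
      apply Fin.ext
      simp only [this]
      omega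
    · intro x hx
      rw [Finset.mem_coe, Finset.mem_filter] at hx
      obtain ⟨hxF, hxres⟩ := hx
      have hxi : (((i:ℕ)):ℤ) = (x + c) % n := by rw [← hxres]; exact hrescast x
      have hdm := Int.mul_ediv_add_emod (x + c) n
      linarith
    · intro q hq
      have : q * n + (i:ℕ) - c + c = (i:ℕ) + q * n := by ring
      beta_reduce
      rw [this, Int.add_mul_ediv_right _ _ hnne,
        Int.ediv_eq_zero_of_lt (by positivity) (by exact_mod_cast i.isLt)]
      ring
  have hnm : ∀ i : Fin n, (n:ℤ) * m i = (((i:ℕ):ℤ) - c) % n - (i:ℕ) + c := by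
    intro i; have := hr i; linarith
  have hresinj : Function.Injective (fun i : Fin n => (⟨((((i:ℕ):ℤ) - c) % n).toNat,
      by have := hr0 i; have := hrn i; omega⟩ : Fin n)) := by
    intro i j hij
    have h1 : ((((i:ℕ):ℤ) - c) % n) = ((((j:ℕ):ℤ) - c) % n) := by
      have := congrArg (fun x : Fin n => ((x:ℕ):ℤ)) hij
      simp only at this
      have hi := hr0 i; have hj := hr0 j
      simpa [Int.toNat_of_nonneg hi, Int.toNat_of_nonneg hj] using this
    have h1' : Int.ModEq n (((i:ℕ):ℤ) - c) (((j:ℕ):ℤ) - c) := h1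
    have h2 : Int.ModEq n ((i:ℕ):ℤ) ((j:ℕ):ℤ) := by
      have := Int.ModEq.add_right c h1'
      simpa using this
    have h3 : (n:ℤ) ∣ (((j:ℕ):ℤ) - ((i:ℕ):ℤ)) := h2.dvd
    obtain ⟨k, hk⟩ := h3
    have hi := i.isLt; have hj := j.isLt
    have : ((i:ℕ):ℤ) = ((j:ℕ):ℤ) := by
      rcases lt_trichotomy k 0 with h | h | h
      · nlinarith [(by omega : k ≤ -1)]
      · simp [h] at hk; omega
      · nlinarith [(by omega : 1 ≤ k)]
    exact Fin.ext (by omega)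
  have hressum : ∑ i : Fin n, ((((i:ℕ):ℤ) - c) % n) = ∑ i : Fin n, ((i:ℕ):ℤ) := by
    have hbij := Finite.injective_iff_bijective.mp hresinj
    refine Fintype.sum_bijective _ hbij _ _ ?_
    intro i
    simp only
    rw [Int.toNat_of_nonneg (hr0 i)]
  have hmsum : ∑ i : Fin n, m i = c := by
    have h1 : (n:ℤ) * (∑ i : Fin n, m i) = ∑ i : Fin n, ((n:ℤ) * m i) := Finset.mul_sum _ _ _
    have h2 : ∑ i : Fin n, ((n:ℤ) * m i) = (n:ℤ) * c := by
      calc ∑ i : Fin n, ((n:ℤ) * m i)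
          = ∑ i : Fin n, (((((i:ℕ):ℤ) - c) % n - ((i:ℕ):ℤ)) + c) :=
            Finset.sum_congr rfl (fun i _ => hnm i)
        _ = ((∑ i : Fin n, ((((i:ℕ):ℤ) - c) % n)) - ∑ i : Fin n, ((i:ℕ):ℤ))
            + ∑ _i : Fin n, c := by
            rw [Finset.sum_add_distrib, Finset.sum_sub_distrib]
        _ = (n:ℤ) * c := by
            rw [hressum]
            simp [Finset.card_univ, mul_comm]
    have := h1.trans h2
    exact mul_left_cancel₀ hnne this
  have hIco : ∀ i : Fin n, ((Finset.Ico (m i) (a i)).card : ℤ) = a i - m i := by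
    intro i
    rw [Int.card_Ico, Int.toNat_of_nonneg (by have := hma i; omega)]
  have hlsum : (ℓ : ℤ) = ∑ i : Fin n, (a i - m i) := by
    have h1 : (ℓ:ℤ) = ((∑ i : Fin n, (F.filter (fun x => res x = i)).card : ℕ) : ℤ) := by
      rw [← hcount, hFcard]
    rw [h1]
    push_cast
    refine Finset.sum_congr rfl (fun i _ => ?_)
    rw [hfiber i]
    exact_mod_cast hIco i
  have hlc : (ℓ : ℤ) = -c := by
    rw [hlsum, Finset.sum_sub_distrib, hsum, hmsum]
    ring
  -- Part 2: identify u 0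
  set q0 : ℤ := c / n with hq0
  have hcm0 : 0 ≤ c % n := Int.emod_nonneg _ hnne
  have hcmn : c % n < n := Int.emod_lt_of_pos _ hn0
  set i0 : Fin n := ⟨(c % n).toNat, by omega⟩ with hi0
  have hi0c : ((i0:ℕ):ℤ) = c % n := by
    simp only [hi0]
    exact Int.toNat_of_nonneg hcm0
  have hc0 : c = n * q0 + ((i0:ℕ):ℤ) := by
    rw [hi0c, hq0]
    exact (Int.mul_ediv_add_emod c n).symm
  have hai0le : a i0 ≤ q0 := by
    by_contra h
    push_neg at h
    have hb := (hc i0 q0).mpr h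
    have hz : q0 * n + ((i0:ℕ):ℤ) - c = 0 := by rw [hc0]; ring
    rw [hz] at hb
    exact h0nb hb
  have hmi0 : m i0 = q0 := by
    have h1 : ((i0:ℕ):ℤ) - c = (n:ℤ) * (-q0) := by rw [hc0]; ring
    simp only [hm]
    rw [h1, Int.mul_ediv_cancel_left _ hnne]
    ring
  have hai0 : a i0 = q0 := le_antisymm hai0le (by rw [← hmi0]; exact hma i0)
  have hage : ∀ i : Fin n, (i0:ℕ) ≤ (i:ℕ) → q0 ≤ a i := by
    intro i hi
    have h1 : ((i:ℕ):ℤ) - c = (((i:ℕ):ℤ) - ((i0:ℕ):ℤ)) + (-q0) * n := by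
      rw [hc0]; ring
    have hlt := i.isLt
    have hlt0 := i0.isLt
    have h2 : m i = q0 := by
      simp only [hm]
      rw [h1, Int.add_mul_ediv_right _ _ hnne,
        Int.ediv_eq_zero_of_lt (by push_cast; omega) (by push_cast; omega)]
      ring
    rw [← h2]; exact hma i
  have hagt : ∀ i : Fin n, (i:ℕ) < (i0:ℕ) → q0 + 1 ≤ a i := by
    intro i hi
    have h1 : ((i:ℕ):ℤ) = (((i:ℕ):ℤ) - ((i0:ℕ):ℤ) + n) + (-q0 - 1) * n + c := by
      rw [hc0]; ring
    have h1' : ((i:ℕ):ℤ) - c = (((i:ℕ):ℤ) - ((i0:ℕ):ℤ) + n) + (-q0 - 1) * n := by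
      rw [hc0]; ring
    have hlt := i.isLt
    have hlt0 := i0.isLt
    have h2 : m i = q0 + 1 := by
      simp only [hm]
      rw [h1', Int.add_mul_ediv_right _ _ hnne,
        Int.ediv_eq_zero_of_lt (by push_cast; omega) (by push_cast; omega)]
      ring
    rw [← h2]; exact hma i
  set z : Fin n := ⟨0, by omega⟩ with hzdef
  have huz : u z = i0 := by
    by_contra hne
    set j : Fin n := u.symm i0 with hj
    have huj : u j = i0 := u.apply_symm_apply i0
    have hjz : z < j := by
      rcases Nat.eq_zero_or_pos (j:ℕ) with h | h
      · exact absurd (by rw [← huj]; congr 1; exact Fin.ext (by simp [hzdef, h])) hne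
      · exact Fin.lt_def.mpr (by simp [hzdef]; omega)
    rcases hu z j hjz with h | ⟨h1, h2⟩
    · rw [huj, hai0] at h
      rcases Nat.lt_or_ge ((u z : Fin n):ℕ) ((i0:Fin n):ℕ) with h3 | h3
      · have := hagt (u z) h3; omega
      · have := hage (u z) h3; omega
    · rw [huj] at h1 h2
      have h3 := hagt (u z) h2
      rw [h1, hai0] at h3
      omega
  have hcz : c = n * a (u z) + ((u z : ℕ) : ℤ) := by
    rw [huz, hai0, hi0c, hq0]
    exact (Int.mul_ediv_add_emod c n).symm
  -- Part 3: the real computation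
  have hnR : (0:ℝ) < (n:ℝ) := by exact_mod_cast (by omega : 0 < n)
  set w : Fin n → ℝ := winv n u a (fun t => rhoV n t / n) with hw
  have hterm : ∀ i : Fin n, w i * (if (i : ℕ) = 0 then (n : ℝ) - 1 else -1)
      = (if i = z then w i * n else 0) - w i := by
    intro i
    by_cases h : i = z
    · subst h
      rw [if_pos rfl, if_pos (by simp [hzdef])]
      ring
    · rw [if_neg h, if_neg (by
        intro h'
        exact h (Fin.ext (by simp [hzdef, h']))), zero_sub]
      ring
  rw [Finset.sum_congr rfl (fun i _ => hterm i), Finset.sum_sub_distrib,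
    Finset.sum_ite_eq' Finset.univ z (fun i => w i * n), if_pos (Finset.mem_univ z)]
  have hgauss : (∑ i ∈ Finset.range n, (i:ℝ)) * 2 = (n:ℝ) * ((n:ℝ) - 1) := by
    have h1 := Finset.sum_range_id_mul_two n
    have h2 := congrArg (Nat.cast : ℕ → ℝ) h1
    push_cast [Nat.cast_sub (by omega : 1 ≤ n)] at h2
    exact h2
  have hrho : ∑ j : Fin n, rhoV n j = 0 := by
    unfold rhoV
    rw [Finset.sum_sub_distrib, Finset.sum_const, Finset.card_univ, Fintype.card_fin,
      Fin.sum_univ_eq_sum_range (fun j => ((j:ℕ):ℝ))]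
    rw [nsmul_eq_mul]
    linarith
  have haR : ∑ j : Fin n, (a j : ℝ) = 0 := by
    have := congrArg (Int.cast : ℤ → ℝ) hsum
    push_cast at this
    simpa using this
  have hsw : ∑ i : Fin n, w i = 0 := by
    have h1 : ∑ i : Fin n, w i = ∑ j : Fin n, (rhoV n j / n - (a j : ℝ)) :=
      Equiv.sum_comp u (fun j => rhoV n j / n - (a j : ℝ))
    rw [h1, Finset.sum_sub_distrib, haR, ← Finset.sum_div, hrho]
    simp
  rw [hsw, sub_zero]
  have hcast : ((ℓ:ℤ):ℝ) = ((-(n * a (u z) + ((u z : ℕ) : ℤ)) : ℤ) : ℝ) := by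
    simp only [hlc, hcz]
  push_cast at hcast
  have hmain : w z * n = rhoV n (u z) - (n:ℝ) * (a (u z) : ℝ) := by
    simp only [hw, winv]
    field_simp
  rw [hmain]
  unfold rhoV
  rw [hcast]
  ring

end Shi
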